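/- For every integer k ≥ 2, 1 + Σ_{r=2}^{⌊(k+1)/2⌋} Σ_{j=0}^{k−2r+1} C(k−2−j, 2r−3) = 2^{k−2}. (This is the identity established in the proof of the Theorem counting simple chambers: summing over the number r of generators and the tail cardinality j, the number C(k−2−j, 2r−3) of arrangements of the remaining boxes gives 2^{k−2}, whence, together with the k choices of first generator, there are exactly k·2^{k−2} simple chambers.) -/

import Mathlib

open Finset

/-- Hockey stick starting at `t`. -/
lemma hockey (t m : ℕ) :
    ∑ j ∈ range (m + 1), (t + j).choose t = (t + m + 1).choose (t + 1) := by
  induction m with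
  | zero => simp
  | succ m ih =>
      rw [Finset.sum_range_succ, ih]
      have h2 : t + (m + 1) = t + m + 1 := by omega
      rw [h2, Nat.choose_succ_succ' (t + m + 1) t]
      omega

/-- Sum of even-index binomial coefficients of row `n+1` is `2^n`. -/
lemma even_sum_choose (n : ℕ) :
    ∑ s ∈ range ((n + 1) / 2 + 1), (n + 1).choose (2 * s) = 2 ^ n := by
  have key : (∑ s ∈ range ((n + 1) / 2 + 1), ((n + 1).choose (2 * s) : ℤ)) = 2 ^ n := by
    have h1 : ∑ i ∈ range (n + 2), ((-1 : ℤ)) ^ i * (n + 1).choose i = 0 :=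
      Int.alternating_sum_range_choose_of_ne (by omega)
    have h2 : ∑ i ∈ range (n + 2), ((n + 1).choose i : ℤ) = 2 ^ (n + 1) := by
      exact_mod_cast Nat.sum_range_choose (n + 1)
    have h3 : ∑ i ∈ range (n + 2), ((1 : ℤ) + (-1) ^ i) * (n + 1).choose i = 2 ^ (n + 1) := by
      simp only [add_mul, one_mul, Finset.sum_add_distrib, h1, h2, add_zero]
    have h4 : ∑ i ∈ range (n + 2), ((1 : ℤ) + (-1) ^ i) * (n + 1).choose i
        = ∑ i ∈ (range (n + 2)).filter (fun i => Even i),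
            ((1 : ℤ) + (-1) ^ i) * (n + 1).choose i := by
      rw [← Finset.sum_filter_add_sum_filter_not (range (n + 2)) (fun i => Even i)]
      have : ∑ i ∈ (range (n + 2)).filter (fun i => ¬ Even i),
          ((1 : ℤ) + (-1) ^ i) * (n + 1).choose i = 0 := by
        apply Finset.sum_eq_zero
        intro i hi
        simp only [Finset.mem_filter] at hi
        have : Odd i := Nat.not_even_iff_odd.mp hi.2
        rw [this.neg_one_pow]
        ring
      rw [this, add_zero]
    have h5 : ∑ i ∈ (range (n + 2)).filter (fun i => Even i),
        ((1 : ℤ) + (-1) ^ i) * (n + 1).choose i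
        = ∑ s ∈ range ((n + 1) / 2 + 1), 2 * ((n + 1).choose (2 * s) : ℤ) := by
      refine Finset.sum_nbij' (fun i => i / 2) (fun s => 2 * s) ?_ ?_ ?_ ?_ ?_
      · intro i hi
        simp only [Finset.mem_filter, Finset.mem_range] at hi
        obtain ⟨hlt, he⟩ := hi
        obtain ⟨t, rfl⟩ := he
        simp only [Finset.mem_range]
        omega
      · intro s hs
        simp only [Finset.mem_range] at hs ⊢
        simp only [Finset.mem_filter, Finset.mem_range]
        constructor
        · have : s ≤ (n + 1) / 2 := by omega
          have := Nat.div_mul_le_self (n + 1) 2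
          omega
        · exact ⟨s, by ring⟩
      · intro i hi
        simp only [Finset.mem_filter, Finset.mem_range] at hi
        obtain ⟨_, t, rfl⟩ := hi
        beta_reduce
        omega
      · intro s _
        beta_reduce
        omega
      · intro i hi
        simp only [Finset.mem_filter, Finset.mem_range] at hi
        obtain ⟨_, t, rfl⟩ := hi
        have he : Even (t + t) := ⟨t, rfl⟩
        rw [he.neg_one_pow]
        beta_reduce
        have hd : (t + t) / 2 = t := by omega
        rw [hd, two_mul]
        push_cast
        ring_nf
    rw [h4, h5, ← Finset.mul_sum] at h3
    have h2pow : (2 : ℤ) ^ (n + 1) = 2 * 2 ^ n := by ring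
    rw [h2pow] at h3
    exact mul_left_cancel₀ (by norm_num) h3
  exact_mod_cast key

theorem stmt8 (k : ℕ) (hk : 2 ≤ k) :
    1 + ∑ r ∈ Finset.Icc 2 ((k + 1) / 2), ∑ j ∈ Finset.Icc 0 (k + 1 - 2 * r),
      Nat.choose (k - 2 - j) (2 * r - 3) = 2 ^ (k - 2) := by
  obtain ⟨n, rfl⟩ : ∃ n, k = n + 2 := ⟨k - 2, by omega⟩
  have hk' : (n + 2 + 1) / 2 = (n + 3) / 2 := by norm_num
  have inner : ∀ r ∈ Finset.Icc 2 ((n + 2 + 1) / 2),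
      (∑ j ∈ Finset.Icc 0 (n + 2 + 1 - 2 * r), Nat.choose (n + 2 - 2 - j) (2 * r - 3))
        = (n + 1).choose (2 * r - 2) := by
    intro r hr
    simp only [Finset.mem_Icc] at hr
    obtain ⟨hr2, hrn⟩ := hr
    have h2r : 2 * r ≤ n + 3 := by omega
    have hIcc : Finset.Icc 0 (n + 2 + 1 - 2 * r) = Finset.range (n + 4 - 2 * r) := by
      ext x; simp only [Finset.mem_Icc, Finset.mem_range]; omega
    rw [hIcc]
    have hm : n + 4 - 2 * r = (n + 3 - 2 * r) + 1 := by omega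
    have hrefl := Finset.sum_range_reflect
      (fun j => Nat.choose (n + 2 - 2 - j) (2 * r - 3)) (n + 4 - 2 * r)
    rw [← hrefl]
    have congr1 : ∑ j ∈ range (n + 4 - 2 * r),
        Nat.choose (n + 2 - 2 - (n + 4 - 2 * r - 1 - j)) (2 * r - 3)
        = ∑ j ∈ range ((n + 3 - 2 * r) + 1), ((2 * r - 3) + j).choose (2 * r - 3) := by
      rw [← hm]
      apply Finset.sum_congr rfl
      intro j hj
      simp only [Finset.mem_range] at hj
      congr 1
      omega
    rw [congr1, hockey]
    congr 1 <;> omega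
  rw [Finset.sum_congr rfl inner]
  have houter : ∑ r ∈ Finset.Icc 2 ((n + 2 + 1) / 2), (n + 1).choose (2 * r - 2)
      = ∑ s ∈ range ((n + 1) / 2), (n + 1).choose (2 * (s + 1)) := by
    refine Finset.sum_nbij' (fun r => r - 2) (fun s => s + 2) ?_ ?_ ?_ ?_ ?_
    · intro r hr
      simp only [Finset.mem_Icc] at hr
      simp only [Finset.mem_range]
      omega
    · intro s hs
      simp only [Finset.mem_range] at hs
      simp only [Finset.mem_Icc]
      omega
    · intro r hr; simp only [Finset.mem_Icc] at hr; beta_reduce; omega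
    · intro s _; beta_reduce; omega
    · intro r hr
      simp only [Finset.mem_Icc] at hr
      beta_reduce
      congr 1
      omega
  rw [houter]
  have hpeel : ∑ s ∈ range ((n + 1) / 2 + 1), (n + 1).choose (2 * s)
      = (n + 1).choose 0 + ∑ s ∈ range ((n + 1) / 2), (n + 1).choose (2 * (s + 1)) := by
    rw [Finset.sum_range_succ' (fun s => (n + 1).choose (2 * s)) ((n + 1) / 2)]
    simp [add_comm]
  have := even_sum_choose n
  rw [hpeel] at this
  simpa using this
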